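/- Let P1 and P2 be two distinct points of P^1 x P^1 that do not lie on a common rule (their first coordinates differ and their second coordinates differ), and let I = I({P1,P2}) = I(P1) ∩ I(P2). Then I^(m) = I^m for all m ≥ 1, where I^(m) = I(P1)^m ∩ I(P2)^m. In particular, for I = (x0,y0) ∩ (x1,y1) in k[x0,x1,y0,y1], one has (x0,y0)^m ∩ (x1,y1)^m = I^m for all m ≥ 1. -/

import Mathlib

open MvPolynomial

noncomputable section

/-- The weights giving the bigrading on `k[x0,x1,y0,y1]` with
`deg x0 = deg x1 = (1,0)` and `deg y0 = deg y1 = (0,1)`. -/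
def w4 : Fin 4 → ℕ × ℕ := ![(1,0), (1,0), (0,1), (0,1)]

variable (k : Type*) [Field k]

/-- `p = ((a0,a1),(b0,b1))` represents a point `[a0:a1] × [b0:b1]` of `P^1 × P^1`
if neither pair of coordinates is identically zero. -/
def IsPtRep (p : (k × k) × (k × k)) : Prop := p.1 ≠ 0 ∧ p.2 ≠ 0

/-- Two (nonzero) vectors of `k²` define the same point of `P^1`. -/
def ProjEq (u v : k × k) : Prop := u.1 * v.2 = u.2 * v.1

/-- Two representatives define the same point of `P^1 × P^1`. -/
def PtEq (p q : (k × k) × (k × k)) : Prop := ProjEq k p.1 q.1 ∧ ProjEq k p.2 q.2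

/-- The bihomogeneous ideal of the point `[a0:a1] × [b0:b1]`, namely
`(a1*x0 - a0*x1, b1*y0 - b0*y1)`. -/
def pointIdeal (p : (k × k) × (k × k)) : Ideal (MvPolynomial (Fin 4) k) :=
  Ideal.span {C p.1.2 * X 0 - C p.1.1 * X 1, C p.2.2 * X 2 - C p.2.1 * X 3}

/-- The ideal `I(Z) = ∩ I(P_i)` of a finite tuple of points. -/
def idealOfPoints {s : ℕ} (Z : Fin s → (k × k) × (k × k)) :
    Ideal (MvPolynomial (Fin 4) k) :=
  ⨅ i, pointIdeal k (Z i)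

/-- The `m`-th symbolic power `I(Z)^(m) = ∩ I(P_i)^m`. -/
def symbolicPower {s : ℕ} (Z : Fin s → (k × k) × (k × k)) (m : ℕ) :
    Ideal (MvPolynomial (Fin 4) k) :=
  ⨅ i, (pointIdeal k (Z i)) ^ m

/-- The bigraded piece `J_(i,j)` of a bihomogeneous ideal, as a `k`-subspace. -/
def bipiece (J : Ideal (MvPolynomial (Fin 4) k)) (d : ℕ × ℕ) :
    Submodule k (MvPolynomial (Fin 4) k) :=
  (Submodule.restrictScalars k J) ⊓ (weightedHomogeneousSubmodule k w4 d)

/-- `α(J)`: the least total degree `t = i + j` in which `J` has a nonzero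
bihomogeneous element of bidegree `(i,j)`. -/
def alpha (J : Ideal (MvPolynomial (Fin 4) k)) : ℕ :=
  sInf {t | ∃ F ∈ J, F ≠ 0 ∧ ∃ d : ℕ × ℕ, d.1 + d.2 = t ∧ F.IsWeightedHomogeneous w4 d}

/-- The coordinates of a tuple of points of `P^1 × P^1`, as a point of affine `4s`-space. -/
def coordsOf {s : ℕ} (Z : Fin s → (k × k) × (k × k)) : Fin s × Fin 4 → k :=
  fun p => ![(Z p.1).1.1, (Z p.1).1.2, (Z p.1).2.1, (Z p.1).2.2] p.2

/-- The weights making `k[(P^1 × P^1)^s]` multigraded. -/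
def wProd (s : ℕ) : Fin s × Fin 4 → (Fin s → ℕ × ℕ) := fun p => Pi.single p.1 (w4 p.2)

/-- `GeneralPosition k s P` says that property `P` holds for `s` general points of
`P^1 × P^1`: there is a nonempty Zariski-open subset `U` of `(P^1 × P^1)^s` (the
complement of the zero locus of a multihomogeneous form `G` not vanishing identically)
such that `P` holds for every tuple of pairwise distinct points lying in `U`. -/
def GeneralPosition (s : ℕ) (P : (Fin s → (k × k) × (k × k)) → Prop) : Prop :=
  ∃ (G : MvPolynomial (Fin s × Fin 4) k) (d : Fin s → ℕ × ℕ),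
    G.IsWeightedHomogeneous (wProd s) d ∧
    (∃ Z : Fin s → (k × k) × (k × k), (∀ i, IsPtRep k (Z i)) ∧ eval (coordsOf k Z) G ≠ 0) ∧
    ∀ Z : Fin s → (k × k) × (k × k), (∀ i, IsPtRep k (Z i)) →
      (∀ i j, i ≠ j → ¬ PtEq k (Z i) (Z j)) →
      eval (coordsOf k Z) G ≠ 0 → P Z

/-- Distinct points in multiplicity 1 generic position: every subset `S` imposes
independent conditions in every bidegree, i.e.
`dim_k I(S)_(i,j) = max {0, (i+1)(j+1) - |S|}`. -/
def Mult1Generic {s : ℕ} (Z : Fin s → (k × k) × (k × k)) : Prop :=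
  (∀ i, IsPtRep k (Z i)) ∧ (∀ i j, i ≠ j → ¬ PtEq k (Z i) (Z j)) ∧
  ∀ (S : Finset (Fin s)) (i j : ℕ),
    Module.finrank k ↥(bipiece k (⨅ a ∈ S, pointIdeal k (Z a)) (i, j))
      = (i + 1) * (j + 1) - S.card

section
namespace TwoPointsAux
open Pointwise
variable {k : Type*} [Field k]

/-- Exponent set for `(X u, X v)^a`. -/
def expSet (u v : Fin 4) (a : ℕ) : Set (Fin 4 →₀ ℕ) :=
  {s | ∃ i j, i + j = a ∧ s = Finsupp.single u i + Finsupp.single v j}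

lemma span_pair_pow (u v : Fin 4) (a : ℕ) :
    (Ideal.span {X u, X v} : Ideal (MvPolynomial (Fin 4) k)) ^ a
      = Ideal.span ((fun s => monomial s (1 : k)) '' expSet u v a) := by
  induction a with
  | zero =>
    have h : expSet u v 0 = {(0 : Fin 4 →₀ ℕ)} := by
      ext s
      constructor
      · rintro ⟨i, j, hij, rfl⟩
        obtain ⟨rfl, rfl⟩ : i = 0 ∧ j = 0 := by omega
        simp
      · rintro rfl; exact ⟨0, 0, rfl, by simp⟩
    simp [h, Ideal.one_eq_top, Ideal.span_singleton_one]
  | succ a ih =>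
    have hX : ∀ w : Fin 4, (X w : MvPolynomial (Fin 4) k) = monomial (Finsupp.single w 1) 1 := by
      intro w; rw [← X_pow_eq_monomial, pow_one]
    rw [pow_succ, ih, hX u, hX v, Ideal.span_mul_span']
    congr 1
    ext z
    constructor
    · rintro ⟨x, ⟨s, ⟨i, j, hij, rfl⟩, rfl⟩, y, hy, rfl⟩
      rcases hy with rfl | rfl
      · refine ⟨Finsupp.single u (i+1) + Finsupp.single v j, ⟨i+1, j, by omega, rfl⟩, ?_⟩
        simp only [monomial_mul, mul_one]
        congr 1
        rw [Finsupp.single_add]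
        abel_nf
      · refine ⟨Finsupp.single u i + Finsupp.single v (j+1), ⟨i, j+1, by omega, rfl⟩, ?_⟩
        simp only [monomial_mul, mul_one]
        congr 1
        rw [Finsupp.single_add]
        abel_nf
    · rintro ⟨s, ⟨i, j, hij, rfl⟩, rfl⟩
      rcases i with _ | i
      · obtain rfl : j = a + 1 := by omega
        refine ⟨monomial (Finsupp.single u 0 + Finsupp.single v a) 1,
          ⟨_, ⟨0, a, by omega, rfl⟩, rfl⟩,
          monomial (Finsupp.single v 1) 1, Or.inr rfl, ?_⟩
        simp only [monomial_mul, mul_one]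
        congr 1
        rw [Finsupp.single_add]
        abel_nf
      · refine ⟨monomial (Finsupp.single u i + Finsupp.single v j) 1,
          ⟨_, ⟨i, j, by omega, rfl⟩, rfl⟩,
          monomial (Finsupp.single u 1) 1, Or.inl rfl, ?_⟩
        simp only [monomial_mul, mul_one]
        congr 1
        rw [Finsupp.single_add]
        abel_nf

lemma mem_pow_pair {u v : Fin 4} (huv : u ≠ v) (a : ℕ) (f : MvPolynomial (Fin 4) k) :
    f ∈ (Ideal.span {X u, X v} : Ideal (MvPolynomial (Fin 4) k)) ^ a ↔
      ∀ m ∈ f.support, a ≤ m u + m v := by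
  rw [span_pair_pow, mem_ideal_span_monomial_image]
  refine forall₂_congr fun m _ => ?_
  constructor
  · rintro ⟨s, ⟨i, j, hij, rfl⟩, hle⟩
    rw [Finsupp.le_def] at hle
    have h1 := hle u
    have h2 := hle v
    simp [Finsupp.single_apply, huv, huv.symm] at h1 h2
    omega
  · intro h
    refine ⟨Finsupp.single u (min (m u) a) + Finsupp.single v (a - min (m u) a),
      ⟨_, _, by omega, rfl⟩, ?_⟩
    rw [Finsupp.le_def]
    intro w
    rcases eq_or_ne w u with rfl | hwu
    · simp [Finsupp.single_apply, huv.symm]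
      try omega
    rcases eq_or_ne w v with rfl | hwv
    · simp [Finsupp.single_apply, huv, hwu.symm]
      try omega
    · simp [Finsupp.single_apply, hwu.symm, hwv.symm]

lemma pow_mul_pow (a b : ℕ) :
    (Ideal.span {X 0, X 2} : Ideal (MvPolynomial (Fin 4) k)) ^ a * (Ideal.span {X 1, X 3}) ^ b
      = Ideal.span ((fun s => monomial s (1 : k)) '' (expSet 0 2 a + expSet 1 3 b)) := by
  rw [span_pair_pow, span_pair_pow, Ideal.span_mul_span']
  congr 1
  ext z
  constructor
  · rintro ⟨x, ⟨s, hs, rfl⟩, y, ⟨t, ht, rfl⟩, rfl⟩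
    exact ⟨s + t, ⟨s, hs, t, ht, rfl⟩, by simp only [monomial_mul, mul_one]⟩
  · rintro ⟨w, ⟨s, hs, t, ht, rfl⟩, rfl⟩
    exact ⟨_, ⟨s, hs, rfl⟩, _, ⟨t, ht, rfl⟩, by simp only [monomial_mul, mul_one]⟩

lemma mem_pow_mul_pow (a b : ℕ) (f : MvPolynomial (Fin 4) k) :
    f ∈ (Ideal.span {X 0, X 2} : Ideal (MvPolynomial (Fin 4) k)) ^ a * (Ideal.span {X 1, X 3}) ^ b ↔
      ∀ m ∈ f.support, a ≤ m 0 + m 2 ∧ b ≤ m 1 + m 3 := by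
  rw [pow_mul_pow, mem_ideal_span_monomial_image]
  refine forall₂_congr fun m _ => ?_
  constructor
  · rintro ⟨_, ⟨s, ⟨i, j, hij, rfl⟩, t, ⟨p, q, hpq, rfl⟩, rfl⟩, hle⟩
    rw [Finsupp.le_def] at hle
    have h0 := hle 0
    have h1 := hle 1
    have h2 := hle 2
    have h3 := hle 3
    simp [Finsupp.single_apply] at h0 h1 h2 h3
    omega
  · rintro ⟨ha, hb⟩
    refine ⟨(Finsupp.single 0 (min (m 0) a) + Finsupp.single 2 (a - min (m 0) a)) +
        (Finsupp.single 1 (min (m 1) b) + Finsupp.single 3 (b - min (m 1) b)),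
      ⟨_, ⟨_, _, by omega, rfl⟩, _, ⟨_, _, by omega, rfl⟩, rfl⟩, ?_⟩
    rw [Finsupp.le_def]
    intro w
    fin_cases w <;> simp [Finsupp.single_apply] <;> omega

lemma inf_pow_eq (a b : ℕ) :
    (Ideal.span {X 0, X 2} : Ideal (MvPolynomial (Fin 4) k)) ^ a ⊓ (Ideal.span {X 1, X 3}) ^ b
      = (Ideal.span {X 0, X 2}) ^ a * (Ideal.span {X 1, X 3}) ^ b := by
  refine le_antisymm ?_ (le_inf Ideal.mul_le_left Ideal.mul_le_right)
  intro f hf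
  rw [Ideal.mem_inf, mem_pow_pair (by decide) a, mem_pow_pair (by decide) b] at hf
  rw [mem_pow_mul_pow]
  exact fun m hm => ⟨hf.1 m hm, hf.2 m hm⟩

lemma key (m : ℕ) :
    (Ideal.span {X 0, X 2} : Ideal (MvPolynomial (Fin 4) k)) ^ m ⊓ (Ideal.span {X 1, X 3}) ^ m
      = ((Ideal.span {X 0, X 2} : Ideal (MvPolynomial (Fin 4) k)) ⊓ Ideal.span {X 1, X 3}) ^ m := by
  have h1 : (Ideal.span {X 0, X 2} : Ideal (MvPolynomial (Fin 4) k)) ⊓ Ideal.span {X 1, X 3}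
      = Ideal.span {X 0, X 2} * Ideal.span {X 1, X 3} := by
    simpa using inf_pow_eq (k := k) 1 1
  rw [h1, mul_pow, ← inf_pow_eq]

end TwoPointsAux
end

/-- For two distinct points of `P^1 × P^1` not on a common rule,
`I^(m) = I^m` for all `m ≥ 1`; in particular
`(x0,y0)^m ∩ (x1,y1)^m = ((x0,y0) ∩ (x1,y1))^m` for all `m ≥ 1`. -/
theorem symbolic_eq_ordinary_two_points {k : Type*} [Field k] [IsAlgClosed k]
    (P1 P2 : (k × k) × (k × k)) (h1 : IsPtRep k P1) (h2 : IsPtRep k P2)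
    (hdist : ¬ PtEq k P1 P2)
    (hrule1 : ¬ ProjEq k P1.1 P2.1) (hrule2 : ¬ ProjEq k P1.2 P2.2) :
    (∀ m : ℕ, 1 ≤ m →
      pointIdeal k P1 ^ m ⊓ pointIdeal k P2 ^ m
        = (pointIdeal k P1 ⊓ pointIdeal k P2) ^ m) ∧
    (∀ m : ℕ, 1 ≤ m →
      (Ideal.span {X 0, X 2} : Ideal (MvPolynomial (Fin 4) k)) ^ m
          ⊓ (Ideal.span {X 1, X 3}) ^ m
        = ((Ideal.span {X 0, X 2} : Ideal (MvPolynomial (Fin 4) k))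
            ⊓ Ideal.span {X 1, X 3}) ^ m) := by
  constructor
  · intro m _
    obtain ⟨⟨a0, a1⟩, b0, b1⟩ := P1
    obtain ⟨⟨c0, c1⟩, d0, d1⟩ := P2
    have hD : a0 * c1 - a1 * c0 ≠ 0 := sub_ne_zero.mpr hrule1
    have hE : b0 * d1 - b1 * d0 ≠ 0 := sub_ne_zero.mpr hrule2
    set D : k := a0 * c1 - a1 * c0 with hDdef
    set E : k := b0 * d1 - b1 * d0 with hEdef
    set f : Fin 4 → MvPolynomial (Fin 4) k :=
      ![C a1 * X 0 - C a0 * X 1, C c1 * X 0 - C c0 * X 1,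
        C b1 * X 2 - C b0 * X 3, C d1 * X 2 - C d0 * X 3] with hf
    set g : Fin 4 → MvPolynomial (Fin 4) k :=
      ![C (-c0 * D⁻¹) * X 0 + C (a0 * D⁻¹) * X 1,
        C (-c1 * D⁻¹) * X 0 + C (a1 * D⁻¹) * X 1,
        C (-d0 * E⁻¹) * X 2 + C (b0 * E⁻¹) * X 3,
        C (-d1 * E⁻¹) * X 2 + C (b1 * E⁻¹) * X 3] with hg
    have hCD : (C a0 * C c1 - C a1 * C c0) * (C D⁻¹ : MvPolynomial (Fin 4) k) = 1 := by
      rw [← C_mul, ← C_mul, ← C_sub, ← C_mul, ← hDdef, mul_inv_cancel₀ hD, C_1]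
    have hCE : (C b0 * C d1 - C b1 * C d0) * (C E⁻¹ : MvPolynomial (Fin 4) k) = 1 := by
      rw [← C_mul, ← C_mul, ← C_sub, ← C_mul, ← hEdef, mul_inv_cancel₀ hE, C_1]
    have hgf : (aeval g).comp (aeval f) = AlgHom.id k (MvPolynomial (Fin 4) k) := by
      apply algHom_ext
      intro i
      have m2 : ∀ h : 2 < 4, (⟨2, h⟩ : Fin 4) = 2 := fun _ => rfl
      have m3 : ∀ h : 3 < 4, (⟨3, h⟩ : Fin 4) = 3 := fun _ => rfl
      fin_cases i <;>
        simp only [Fin.mk_zero, Fin.mk_one, m2, m3, Matrix.vecHead, Matrix.vecTail,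
          Matrix.cons_val_succ, AlgHom.coe_comp, Function.comp_apply, aeval_X, AlgHom.id_apply,
          hf, hg, Matrix.cons_val_zero, Matrix.cons_val_one, Matrix.head_cons,
          Matrix.cons_val_two, Matrix.tail_cons, Matrix.cons_val_three, map_sub, map_add,
          map_mul, map_neg, aeval_C, algebraMap_eq, C_mul, C_neg]
      · linear_combination (X 0 : MvPolynomial (Fin 4) k) * hCD
      · linear_combination (X 1 : MvPolynomial (Fin 4) k) * hCD
      · linear_combination (X 2 : MvPolynomial (Fin 4) k) * hCE
      · linear_combination (X 3 : MvPolynomial (Fin 4) k) * hCE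
    have hfg : (aeval f).comp (aeval g) = AlgHom.id k (MvPolynomial (Fin 4) k) := by
      apply algHom_ext
      intro i
      have m2 : ∀ h : 2 < 4, (⟨2, h⟩ : Fin 4) = 2 := fun _ => rfl
      have m3 : ∀ h : 3 < 4, (⟨3, h⟩ : Fin 4) = 3 := fun _ => rfl
      fin_cases i <;>
        simp only [Fin.mk_zero, Fin.mk_one, m2, m3, Matrix.vecHead, Matrix.vecTail,
          Matrix.cons_val_succ, AlgHom.coe_comp, Function.comp_apply, aeval_X, AlgHom.id_apply,
          hf, hg, Matrix.cons_val_zero, Matrix.cons_val_one, Matrix.head_cons,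
          Matrix.cons_val_two, Matrix.tail_cons, Matrix.cons_val_three, map_sub, map_add,
          map_mul, map_neg, aeval_C, algebraMap_eq, C_mul, C_neg]
      · linear_combination (X 0 : MvPolynomial (Fin 4) k) * hCD
      · linear_combination (X 1 : MvPolynomial (Fin 4) k) * hCD
      · linear_combination (X 2 : MvPolynomial (Fin 4) k) * hCE
      · linear_combination (X 3 : MvPolynomial (Fin 4) k) * hCE
    let e : MvPolynomial (Fin 4) k ≃+* MvPolynomial (Fin 4) k :=
      (AlgEquiv.ofAlgHom (aeval f) (aeval g) hfg hgf).toRingEquiv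
    have he : ∀ x, e x = aeval f x := fun x => rfl
    have hmapA : Ideal.map (e : MvPolynomial (Fin 4) k →+* MvPolynomial (Fin 4) k)
        (Ideal.span {X 0, X 2}) = pointIdeal k ((a0, a1), b0, b1) := by
      rw [Ideal.map_span]
      unfold pointIdeal
      congr 1
      rw [Set.image_insert_eq, Set.image_singleton]
      simp [he, hf]
    have hmapB : Ideal.map (e : MvPolynomial (Fin 4) k →+* MvPolynomial (Fin 4) k)
        (Ideal.span {X 1, X 3}) = pointIdeal k ((c0, c1), d0, d1) := by
      rw [Ideal.map_span]
      unfold pointIdeal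
      congr 1
      rw [Set.image_insert_eq, Set.image_singleton]
      simp [he, hf]
    have hinf : ∀ I J : Ideal (MvPolynomial (Fin 4) k),
        Ideal.map (e : MvPolynomial (Fin 4) k →+* MvPolynomial (Fin 4) k) (I ⊓ J)
          = Ideal.map (e : MvPolynomial (Fin 4) k →+* MvPolynomial (Fin 4) k) I
            ⊓ Ideal.map (e : MvPolynomial (Fin 4) k →+* MvPolynomial (Fin 4) k) J := by
      intro I J
      rw [Ideal.map_comap_of_equiv e, Ideal.map_comap_of_equiv e, Ideal.map_comap_of_equiv e,
        Ideal.comap_inf]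
    calc pointIdeal k ((a0, a1), b0, b1) ^ m ⊓ pointIdeal k ((c0, c1), d0, d1) ^ m
        = Ideal.map (e : MvPolynomial (Fin 4) k →+* MvPolynomial (Fin 4) k)
            ((Ideal.span {X 0, X 2}) ^ m)
          ⊓ Ideal.map (e : MvPolynomial (Fin 4) k →+* MvPolynomial (Fin 4) k)
            ((Ideal.span {X 1, X 3}) ^ m) := by
          rw [Ideal.map_pow, Ideal.map_pow, hmapA, hmapB]
      _ = Ideal.map (e : MvPolynomial (Fin 4) k →+* MvPolynomial (Fin 4) k)
            ((Ideal.span {X 0, X 2}) ^ m ⊓ (Ideal.span {X 1, X 3}) ^ m) := (hinf _ _).symm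
      _ = Ideal.map (e : MvPolynomial (Fin 4) k →+* MvPolynomial (Fin 4) k)
            (((Ideal.span {X 0, X 2} : Ideal (MvPolynomial (Fin 4) k))
              ⊓ Ideal.span {X 1, X 3}) ^ m) := by rw [TwoPointsAux.key m]
      _ = (pointIdeal k ((a0, a1), b0, b1) ⊓ pointIdeal k ((c0, c1), d0, d1)) ^ m := by
          rw [Ideal.map_pow, hinf, hmapA, hmapB]
  · intro m _
    exact TwoPointsAux.key m
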